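/- arXiv:1910.04752 — 2 statements merged into one kernel-verified Lean document; each statement's English description precedes it below -/
import Mathlib

section
/- For all natural numbers p, q ≥ 0, the integral ∫₀¹ (x-1)^p (1+x)^q dx equals (-1)^p · (q! · p!)/((q+p+1)!) · Σ_{j=0}^{q} C(q+p+1, j). -/
open intervalIntegral

private lemma intble (p q : ℕ) :
    IntervalIntegrable (fun x : ℝ => (x - 1) ^ p * (1 + x) ^ q)
      MeasureTheory.volume 0 1 :=
  (Continuous.mul (by continuity) (by continuity)).intervalIntegrable _ _

private lemma key_ibp (p q : ℕ) :
    ((p:ℝ)+1) * (∫ x in (0:ℝ)..1, (x - 1) ^ p * (1 + x) ^ (q+1))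
      + ((q:ℝ)+1) * (∫ x in (0:ℝ)..1, (x - 1) ^ (p+1) * (1 + x) ^ q)
      = (-1:ℝ)^p := by
  have h : ∀ x ∈ Set.uIcc (0:ℝ) 1,
      HasDerivAt (fun x : ℝ => (x-1)^(p+1) * (1+x)^(q+1))
        (((p:ℝ)+1) * ((x-1)^p * (1+x)^(q+1)) + ((q:ℝ)+1) * ((x-1)^(p+1) * (1+x)^q)) x := by
    intro x _
    have h1 : HasDerivAt (fun x : ℝ => (x-1)^(p+1)) (((p:ℝ)+1)*(x-1)^p) x := by
      simpa using (((hasDerivAt_id x).sub_const 1).fun_pow (p+1))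
    have h2 : HasDerivAt (fun x : ℝ => (1+x)^(q+1)) (((q:ℝ)+1)*(1+x)^q) x := by
      simpa using (((hasDerivAt_id x).const_add 1).fun_pow (q+1))
    have := h1.fun_mul h2
    refine this.congr_deriv ?_
    ring
  have hint : IntervalIntegrable
      (fun x : ℝ => ((p:ℝ)+1) * ((x-1)^p * (1+x)^(q+1)) + ((q:ℝ)+1) * ((x-1)^(p+1) * (1+x)^q))
      MeasureTheory.volume 0 1 :=
    Continuous.intervalIntegrable (by continuity) _ _
  have heq := intervalIntegral.integral_eq_sub_of_hasDerivAt h hint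
  rw [intervalIntegral.integral_add ((intble p (q+1)).const_mul _) ((intble (p+1) q).const_mul _),
    intervalIntegral.integral_const_mul, intervalIntegral.integral_const_mul] at heq
  rw [heq]
  simp [pow_succ]

private lemma base_int (p : ℕ) :
    (∫ x in (0:ℝ)..1, (x - 1) ^ p) = (-1:ℝ)^p / ((p:ℝ)+1) := by
  have hp : ((p:ℝ)+1) ≠ 0 := by positivity
  have hd : ∀ x ∈ Set.uIcc (0:ℝ) 1,
      HasDerivAt (fun x : ℝ => (x-1)^(p+1)/((p:ℝ)+1)) ((x-1)^p) x := by
    intro x _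
    have h1 : HasDerivAt (fun x : ℝ => (x-1)^(p+1)) (((p:ℝ)+1)*(x-1)^p) x := by
      simpa using (((hasDerivAt_id x).sub_const 1).fun_pow (p+1))
    have := h1.div_const ((p:ℝ)+1)
    refine this.congr_deriv ?_
    rw [mul_div_cancel_left₀ _ hp]
  have := intervalIntegral.integral_eq_sub_of_hasDerivAt hd
    (Continuous.intervalIntegrable (by continuity) _ _)
  rw [this]
  rw [show ((1:ℝ)-1) = 0 by ring, show ((0:ℝ)-1) = -1 by ring]
  rw [zero_pow (by omega)]
  field_simp [pow_succ]
  ring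

/-- Evaluation of `∫₀¹ (x-1)^p (1+x)^q dx` in terms of binomial sums. -/
theorem integral_x_sub_one_pow_mul_one_add_pow (p q : ℕ) :
    (∫ x in (0:ℝ)..1, (x - 1) ^ p * (1 + x) ^ q) =
      (-1 : ℝ) ^ p * ((q.factorial * p.factorial : ℕ) : ℝ) / ((q + p + 1).factorial : ℝ) *
        ∑ j ∈ Finset.range (q + 1), ((q + p + 1).choose j : ℝ) := by
  induction q generalizing p with
  | zero =>
    simp only [pow_zero, mul_one, Nat.factorial_zero, one_mul, zero_add, Finset.range_one,
      Finset.sum_singleton, Nat.choose_zero_right, Nat.cast_one]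
    rw [base_int]
    have hp : ((p:ℝ)+1) ≠ 0 := by positivity
    rw [Nat.factorial_succ]
    push_cast
    field_simp
  | succ q ih =>
    have hn : q + 1 + p + 1 = q + (p + 1) + 1 := by omega
    have hJ := ih (p+1)
    have hK := key_ibp p q
    rw [hJ] at hK
    have hq1 : q + 1 ≤ q + (p+1) + 1 := by omega
    have hcho : ((q + (p+1) + 1).choose (q+1) : ℝ) * (q+1).factorial * (p+1).factorial
        = ((q + (p+1) + 1).factorial : ℝ) := by
      have := Nat.choose_mul_factorial_mul_factorial hq1
      have hsub : q + (p+1) + 1 - (q+1) = p + 1 := by omega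
      rw [hsub] at this
      exact_mod_cast this
    rw [hn, Finset.sum_range_succ]
    have hfac : ((q + (p+1) + 1).factorial : ℝ) ≠ 0 := by positivity
    have hp1 : ((p:ℝ)+1) ≠ 0 := by positivity
    have hI : (∫ x in (0:ℝ)..1, (x - 1) ^ p * (1 + x) ^ (q+1))
        = ((-1:ℝ)^p - ((q:ℝ)+1) * ((-1 : ℝ) ^ (p+1) * ((q.factorial * (p+1).factorial : ℕ) : ℝ)
            / ((q + (p+1) + 1).factorial : ℝ) *
            ∑ j ∈ Finset.range (q + 1), ((q + (p+1) + 1).choose j : ℝ))) / ((p:ℝ)+1) := by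
      rw [eq_div_iff hp1]
      linarith [hK]
    rw [hI]
    set S := ∑ j ∈ Finset.range (q + 1), ((q + (p+1) + 1).choose j : ℝ) with hS
    set C := ((q + (p+1) + 1).choose (q+1) : ℝ) with hC
    set F := ((q + (p+1) + 1).factorial : ℝ) with hF
    rw [Nat.factorial_succ q, Nat.factorial_succ p] at *
    push_cast at hcho ⊢
    field_simp
    linear_combination (-(-1:ℝ)^p) * hcho
end

section
/- Let n⁺, n⁻ be positive even natural numbers, m := (n⁺+n⁻)/2. Then the expression ((-1)^m (m-1)!)/((n⁺/2-1)!(n⁻/2-1)!) · Σ_{l=0}^{m-2} [(±1)^{m-l-1}/(m-l-1)] · Σ_{l⁺+l⁻=l, 0≤l^±≤n^±/2-1} (-1)^{l⁺} C(n⁺/2-1, l⁺) C(n⁻/2-1, l⁻) equals ±(-1)^{n⁻/2-1} Σ_{j=0}^{n∓/2-1} C(m-1, j), where the upper signs are taken together and the lower signs together, and n∓ means n⁻ for the upper sign and n⁺ for the lower sign. -/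
open Finset

/-- Beta-type identity: `∑ (-1)^i C(a,i)/(d+i) = a!(d-1)!/(d+a)!`. -/
lemma lemA (a : ℕ) : ∀ d : ℕ, 1 ≤ d →
    ∑ i ∈ range (a+1), (-1:ℝ)^i * (a.choose i : ℝ) / ((d+i : ℕ) : ℝ)
      = (a.factorial : ℝ) * ((d-1).factorial : ℝ) / ((d+a).factorial : ℝ) := by
  induction a with
  | zero =>
    intro d hd
    obtain ⟨e, rfl⟩ : ∃ e, d = e + 1 := ⟨d-1, by omega⟩
    simp [Nat.factorial_succ]
    rw [eq_div_iff (by positivity)]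
    field_simp
  | succ a ih =>
    intro d hd
    have key : ∑ i ∈ range (a+2), (-1:ℝ)^i * ((a+1).choose i : ℝ) / ((d+i : ℕ) : ℝ)
        = (∑ i ∈ range (a+1), (-1:ℝ)^i * (a.choose i : ℝ) / ((d+i : ℕ) : ℝ))
          - ∑ i ∈ range (a+1), (-1:ℝ)^i * (a.choose i : ℝ) / (((d+1)+i : ℕ) : ℝ) := by
      rw [Finset.sum_range_succ' _ (a+1)]
      have h1 : ∀ i ∈ range (a+1),
          (-1:ℝ)^(i+1) * ((a+1).choose (i+1) : ℝ) / ((d+(i+1) : ℕ) : ℝ)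
          = -((-1:ℝ)^i * (a.choose i : ℝ) / (((d+1)+i : ℕ) : ℝ))
            + (-1:ℝ)^(i+1) * (a.choose (i+1) : ℝ) / ((d+(i+1) : ℕ) : ℝ) := by
        intro i _
        have hD : ((d+(i+1) : ℕ) : ℝ) = (((d+1)+i : ℕ) : ℝ) := by push_cast; ring
        rw [Nat.choose_succ_succ, hD]
        simp only [Nat.succ_eq_add_one]
        push_cast
        ring
      rw [Finset.sum_congr rfl h1, Finset.sum_add_distrib]
      have h2 : ∑ i ∈ range (a+1), (-1:ℝ)^(i+1) * (a.choose (i+1) : ℝ) / ((d+(i+1) : ℕ) : ℝ)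
          = (∑ i ∈ range (a+2), (-1:ℝ)^i * (a.choose i : ℝ) / ((d+i : ℕ) : ℝ))
            - (-1:ℝ)^0 * (a.choose 0 : ℝ) / ((d+0 : ℕ) : ℝ) := by
        rw [Finset.sum_range_succ' (fun i => (-1:ℝ)^i * (a.choose i : ℝ) / ((d+i : ℕ) : ℝ)) (a+1)]
        ring
      rw [h2]
      have h3 : ∑ i ∈ range (a+2), (-1:ℝ)^i * (a.choose i : ℝ) / ((d+i : ℕ) : ℝ)
          = ∑ i ∈ range (a+1), (-1:ℝ)^i * (a.choose i : ℝ) / ((d+i : ℕ) : ℝ) := by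
        rw [Finset.sum_range_succ, Nat.choose_succ_self]
        simp
      rw [h3]
      simp
      ring
    rw [key, ih d hd, ih (d+1) (by omega)]
    have hd1 : (d - 1) + 1 = d := by omega
    have hfd : (d.factorial : ℝ) = d * (d-1).factorial := by
      rw [← hd1, Nat.factorial_succ]; push_cast [hd1]; ring
    have h4 : (d + 1 - 1) = d := by omega
    rw [h4]
    have h5 : d + (a+1) = (d + a) + 1 := by ring
    have h6 : (d+1) + a = (d + a) + 1 := by ring
    rw [h5, h6, Nat.factorial_succ, Nat.factorial_succ a]
    have hne1 : ((d+a).factorial : ℝ) ≠ 0 := Nat.cast_ne_zero.2 (Nat.factorial_ne_zero _)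
    have hne3 : ((d-1).factorial : ℝ) ≠ 0 := Nat.cast_ne_zero.2 (Nat.factorial_ne_zero _)
    rw [hfd]
    push_cast
    have hne2 : ((d:ℝ) + a) + 1 ≠ 0 := by positivity
    field_simp
    ring

/-- Reflected version: `∑ (-1)^i C(a,i)/(c-i) = (-1)^a a!(c-a-1)!/c!`. -/
lemma lemA' (a c : ℕ) (hc : a + 1 ≤ c) :
    ∑ i ∈ range (a+1), (-1:ℝ)^i * (a.choose i : ℝ) / ((c - i : ℕ) : ℝ)
      = (-1:ℝ)^a * ((a.factorial : ℝ) * (((c-a-1).factorial : ℝ))) / (c.factorial : ℝ) := by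
  rw [← Finset.sum_range_reflect]
  simp only [Nat.add_sub_cancel]
  have h1 : ∀ i ∈ range (a+1),
      (-1:ℝ)^(a - i) * (a.choose (a - i) : ℝ) / ((c - (a - i) : ℕ) : ℝ)
      = (-1:ℝ)^a * ((-1:ℝ)^i * (a.choose i : ℝ) / (((c-a) + i : ℕ) : ℝ)) := by
    intro i hi
    rw [mem_range] at hi
    have hia : i ≤ a := by omega
    have e1 : c - (a - i) = (c - a) + i := by omega
    have e2 : (-1:ℝ)^(a-i) = (-1:ℝ)^a * (-1:ℝ)^i := by
      have h0 : (-1:ℝ)^(a-i) * (-1:ℝ)^i = (-1:ℝ)^a := by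
        rw [← pow_add]; congr 1; omega
      have hsq : (-1:ℝ)^i * (-1:ℝ)^i = 1 := by
        rw [← pow_add, ← two_mul, pow_mul]; norm_num
      rw [← h0, mul_assoc, hsq, mul_one]
    rw [e1, e2, Nat.choose_symm hia]
    ring
  rw [Finset.sum_congr rfl h1, ← Finset.mul_sum, lemA a (c-a) (by omega)]
  have e3 : (c - a - 1) = ((c-a) - 1) := by omega
  have e4 : (c - a) + a = c := by omega
  rw [e3, e4]
  ring

/-- Reindexing a sum over a triangle. -/
lemma swapTri (f : ℕ → ℕ → ℝ) : ∀ n : ℕ,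
    ∑ l ∈ range n, ∑ i ∈ range (l+1), f i (l-i)
      = ∑ i ∈ range n, ∑ j ∈ range (n-i), f i j := by
  intro n
  induction n with
  | zero => simp
  | succ n ih =>
    rw [Finset.sum_range_succ, ih,
      Finset.sum_range_succ (fun i => ∑ j ∈ range (n+1-i), f i j) n]
    have h1 : ∑ i ∈ range n, ∑ j ∈ range (n+1-i), f i j
        = ∑ i ∈ range n, (∑ j ∈ range (n-i), f i j + f i (n - i)) := by
      refine Finset.sum_congr rfl fun i hi => ?_
      rw [mem_range] at hi
      have e : n + 1 - i = (n - i) + 1 := by omega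
      rw [e, Finset.sum_range_succ]
    rw [h1, Finset.sum_add_distrib, Finset.sum_range_succ]
    simp
    ring

/-- The key evaluation for the `+` sign. -/
lemma lemP (a b : ℕ) :
    ∑ l ∈ range (a+b+1), (1 / ((a+b+1-l : ℕ) : ℝ)) *
        ∑ i ∈ range (l+1), (-1:ℝ)^i * (a.choose i : ℝ) * (b.choose (l-i) : ℝ)
    = (-1:ℝ)^a * ((a.factorial : ℝ) * (b.factorial : ℝ)) / ((a+b+1).factorial : ℝ)
      * ∑ j ∈ range (b+1), ((a+b+1).choose j : ℝ) := by
  set f : ℕ → ℕ → ℝ := fun i j =>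
    (-1:ℝ)^i * (a.choose i : ℝ) * (b.choose j : ℝ) / ((a+b+1-(i+j) : ℕ) : ℝ) with hf
  have step1 : ∑ l ∈ range (a+b+1), (1 / ((a+b+1-l : ℕ) : ℝ)) *
        ∑ i ∈ range (l+1), (-1:ℝ)^i * (a.choose i : ℝ) * (b.choose (l-i) : ℝ)
      = ∑ l ∈ range (a+b+1), ∑ i ∈ range (l+1), f i (l-i) := by
    refine Finset.sum_congr rfl fun l hl => ?_
    rw [Finset.mul_sum]
    refine Finset.sum_congr rfl fun i hi => ?_
    rw [mem_range] at hi
    have e : i + (l - i) = l := by omega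
    rw [hf]; simp only [e]
    ring
  rw [step1, swapTri f (a+b+1)]
  have step2 : ∑ i ∈ range (a+b+1), ∑ j ∈ range (a+b+1-i), f i j
      = ∑ i ∈ range (a+1), ∑ j ∈ range (a+b+1-i), f i j := by
    symm
    apply Finset.sum_subset
    · exact Finset.range_subset_range.2 (by omega)
    · intro i _ hi
      rw [mem_range, not_lt] at hi
      have : a.choose i = 0 := Nat.choose_eq_zero_of_lt (by omega)
      apply Finset.sum_eq_zero
      intro j _
      rw [hf]; simp [this]
  rw [step2]
  have step3 : ∑ i ∈ range (a+1), ∑ j ∈ range (a+b+1-i), f i j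
      = ∑ i ∈ range (a+1), ∑ j ∈ range (b+1), f i j := by
    refine Finset.sum_congr rfl fun i hi => ?_
    rw [mem_range] at hi
    symm
    apply Finset.sum_subset
    · exact Finset.range_subset_range.2 (by omega)
    · intro j _ hj
      rw [mem_range, not_lt] at hj
      have : b.choose j = 0 := Nat.choose_eq_zero_of_lt (by omega)
      rw [hf]; simp [this]
  rw [step3, Finset.sum_comm]
  have step4 : ∀ j ∈ range (b+1), ∑ i ∈ range (a+1), f i j
      = (b.choose j : ℝ) * ((-1:ℝ)^a * ((a.factorial : ℝ) * ((b-j).factorial : ℝ))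
          / ((a+b+1-j).factorial : ℝ)) := by
    intro j hj
    rw [mem_range] at hj
    have hb : j ≤ b := by omega
    have e1 : ∀ i, i ≤ a → (a+b+1-(i+j)) = ((a+b+1-j) - i) := by intro i hi; omega
    have : ∑ i ∈ range (a+1), f i j
        = (b.choose j : ℝ) * ∑ i ∈ range (a+1),
            (-1:ℝ)^i * (a.choose i : ℝ) / (((a+b+1-j) - i : ℕ) : ℝ) := by
      rw [Finset.mul_sum]
      refine Finset.sum_congr rfl fun i hi => ?_
      rw [mem_range] at hi
      rw [hf]; simp only [e1 i (by omega)]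
      ring
    rw [this, lemA' a (a+b+1-j) (by omega)]
    have e2 : (a+b+1-j) - a - 1 = b - j := by omega
    rw [e2]
  rw [Finset.sum_congr rfl step4, Finset.mul_sum]
  refine Finset.sum_congr rfl fun j hj => ?_
  rw [mem_range] at hj
  have hb : j ≤ b := by omega
  have h1 := Nat.choose_mul_factorial_mul_factorial hb
  have h2 := Nat.choose_mul_factorial_mul_factorial (show j ≤ a+b+1 by omega)
  have hnat : b.choose j * (b-j).factorial * (a+b+1).factorial
      = b.factorial * ((a+b+1).choose j * (a+b+1-j).factorial) := by
    apply Nat.eq_of_mul_eq_mul_left (Nat.factorial_pos j)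
    calc j.factorial * (b.choose j * (b-j).factorial * (a+b+1).factorial)
        = (b.choose j * j.factorial * (b-j).factorial) * (a+b+1).factorial := by ring
      _ = b.factorial * (a+b+1).factorial := by rw [h1]
      _ = b.factorial * ((a+b+1).choose j * j.factorial * (a+b+1-j).factorial) := by rw [h2]
      _ = j.factorial * (b.factorial * ((a+b+1).choose j * (a+b+1-j).factorial)) := by ring
  have hnatR : (b.choose j : ℝ) * ((b-j).factorial : ℝ) * ((a+b+1).factorial : ℝ)
      = (b.factorial : ℝ) * (((a+b+1).choose j : ℝ) * ((a+b+1-j).factorial : ℝ)) := by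
    exact_mod_cast congrArg (Nat.cast : ℕ → ℝ) hnat
  have hne1 : ((a+b+1-j).factorial : ℝ) ≠ 0 := Nat.cast_ne_zero.2 (Nat.factorial_ne_zero _)
  have hne2 : (((a+b+1)).factorial : ℝ) ≠ 0 := Nat.cast_ne_zero.2 (Nat.factorial_ne_zero _)
  field_simp
  linear_combination hnatR

lemma neg_one_pow_sub (n k : ℕ) (h : k ≤ n) : (-1:ℝ)^(n-k) = (-1)^n * (-1)^k := by
  have h0 : (-1:ℝ)^(n-k) * (-1)^k = (-1)^n := by rw [← pow_add]; congr 1; omega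
  have hsq : (-1:ℝ)^k * (-1)^k = 1 := by rw [← pow_add, ← two_mul, pow_mul]; norm_num
  rw [← h0, mul_assoc, hsq, mul_one]

/-- The key evaluation for the `-` sign. -/
lemma lemM (a b : ℕ) :
    ∑ l ∈ range (a+b+1), ((-1:ℝ)^(a+b+1-l) / ((a+b+1-l : ℕ) : ℝ)) *
        ∑ i ∈ range (l+1), (-1:ℝ)^i * (a.choose i : ℝ) * (b.choose (l-i) : ℝ)
    = (-1:ℝ)^(a+b+1) * ((-1:ℝ)^b * ((a.factorial : ℝ) * (b.factorial : ℝ))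
        / ((a+b+1).factorial : ℝ) * ∑ j ∈ range (a+1), ((a+b+1).choose j : ℝ)) := by
  have key : ∑ l ∈ range (a+b+1), ((-1:ℝ)^(a+b+1-l) / ((a+b+1-l : ℕ) : ℝ)) *
        ∑ i ∈ range (l+1), (-1:ℝ)^i * (a.choose i : ℝ) * (b.choose (l-i) : ℝ)
      = (-1:ℝ)^(a+b+1) * ∑ l ∈ range (b+a+1), (1 / ((b+a+1-l : ℕ) : ℝ)) *
          ∑ i ∈ range (l+1), (-1:ℝ)^i * (b.choose i : ℝ) * (a.choose (l-i) : ℝ) := by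
    rw [show b+a+1 = a+b+1 by ring, Finset.mul_sum]
    refine Finset.sum_congr rfl fun l hl => ?_
    rw [mem_range] at hl
    rw [← Finset.sum_range_reflect
      (fun i => (-1:ℝ)^i * (b.choose i : ℝ) * (a.choose (l-i) : ℝ)) (l+1)]
    simp only [Nat.add_sub_cancel]
    rw [Finset.mul_sum, Finset.mul_sum, Finset.mul_sum]
    refine Finset.sum_congr rfl fun i hi => ?_
    rw [mem_range] at hi
    have e : l - (l - i) = i := by omega
    rw [e, neg_one_pow_sub (a+b+1) l (by omega), neg_one_pow_sub l i (by omega)]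
    ring
  rw [key, lemP b a, show b+a+1 = a+b+1 by ring]
  ring

/-- Simplification of the constants `N_F^±` in the asymptotic expansion of the Witten
integral: formula (eq:Nvalues0) equals formula (eq:Nvalues), for both choices of sign. -/
theorem N_pm_simplification (np nm m : ℕ) (hnp : 0 < np) (hnm : 0 < nm)
    (hep : Even np) (hem : Even nm) (hm : m = (np + nm) / 2) :
    ((((-1 : ℝ) ^ m * ((m - 1).factorial : ℝ)) /
        (((np / 2 - 1).factorial : ℝ) * ((nm / 2 - 1).factorial : ℝ))) *
      ∑ l ∈ Finset.range (m - 1),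
        ((1 : ℝ) ^ (m - l - 1) / ((m - l - 1 : ℕ) : ℝ)) *
          ∑ i ∈ Finset.range (l + 1),
            (-1 : ℝ) ^ i * ((np / 2 - 1).choose i : ℝ) * ((nm / 2 - 1).choose (l - i) : ℝ) =
      (-1 : ℝ) ^ (nm / 2 - 1) * ∑ j ∈ Finset.range (nm / 2), ((m - 1).choose j : ℝ)) ∧
    ((((-1 : ℝ) ^ m * ((m - 1).factorial : ℝ)) /
        (((np / 2 - 1).factorial : ℝ) * ((nm / 2 - 1).factorial : ℝ))) *
      ∑ l ∈ Finset.range (m - 1),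
        ((-1 : ℝ) ^ (m - l - 1) / ((m - l - 1 : ℕ) : ℝ)) *
          ∑ i ∈ Finset.range (l + 1),
            (-1 : ℝ) ^ i * ((np / 2 - 1).choose i : ℝ) * ((nm / 2 - 1).choose (l - i) : ℝ) =
      -((-1 : ℝ) ^ (nm / 2 - 1) * ∑ j ∈ Finset.range (np / 2), ((m - 1).choose j : ℝ))) := by
  obtain ⟨p, hp⟩ := hep
  obtain ⟨q, hq⟩ := hem
  set a := p - 1 with ha
  set b := q - 1 with hb
  have h1 : np / 2 - 1 = a := by omega
  have h2 : nm / 2 - 1 = b := by omega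
  have h3 : nm / 2 = b + 1 := by omega
  have h4 : np / 2 = a + 1 := by omega
  have h5 : m = a + b + 2 := by omega
  have hsub : ∀ l : ℕ, a + b + 2 - l - 1 = a + b + 1 - l := by intro l; omega
  have e1 : a + b + 2 - 1 = a + b + 1 := by omega
  have e2 : a + 1 - 1 = a := by omega
  have e3 : b + 1 - 1 = b := by omega
  simp only [h1, h2, h3, h4, h5, hsub, e1, e2, e3, one_pow]
  have hfa : ((a.factorial : ℝ)) ≠ 0 := Nat.cast_ne_zero.2 (Nat.factorial_ne_zero _)
  have hfb : ((b.factorial : ℝ)) ≠ 0 := Nat.cast_ne_zero.2 (Nat.factorial_ne_zero _)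
  have hfab : (((a+b+1).factorial : ℝ)) ≠ 0 := Nat.cast_ne_zero.2 (Nat.factorial_ne_zero _)
  have hs1 : (-1:ℝ)^(a+b+2) * (-1:ℝ)^a = (-1:ℝ)^b := by
    rw [← pow_add, show a+b+2+a = b + 2*(a+1) by ring, pow_add, pow_mul]
    norm_num
  have hs2 : (-1:ℝ)^(a+b+2) * ((-1:ℝ)^(a+b+1) * (-1:ℝ)^b) = -(-1:ℝ)^b := by
    rw [← pow_add, ← pow_add, show a+b+2+(a+b+1+b) = b + 2*(a+b+1) + 1 by ring,
      pow_add, pow_add, pow_mul]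
    norm_num
  constructor
  · rw [lemP a b]
    field_simp
    linear_combination (∑ j ∈ range (b+1), (((a+b+1).choose j : ℕ) : ℝ)) * hs1
  · rw [lemM a b]
    field_simp
    have hX : (-1:ℝ)^(2*a) = 1 := by rw [pow_mul]; norm_num
    have hY : (-1:ℝ)^(2*b) = 1 := by rw [pow_mul]; norm_num
    linear_combination (-(∑ j ∈ range (a+1), (((a+b+1).choose j : ℕ) : ℝ)) * (-1:ℝ)^(2*b)) * hX
      - (∑ j ∈ range (a+1), (((a+b+1).choose j : ℕ) : ℝ)) * hY
end
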